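/- Let R be a reduced elliptic root system of rank l ≥ 2 with fundamental-set Π ∪ {a} and associated maps k and g. Let α, β ∈ Π with (β^∨,α) = −1. Then g(β) = ∅, k(α) divides k(β), and the triple ((α^∨,β), k(β)/k(α), g(α)) is one of: (−1, 1, ∅), (−2, 1, ∅), (−3, 1, ∅), (−2, 2, ∅), (−3, 3, ∅), (−2, 1, 2ℤ+1). -/

import Mathlib

/- ## Preliminaries: extended affine root systems (Saito) -/

noncomputable section

open Set

/-- The reflection `s_v : z ↦ z - (v^∨, z) v = z - (2 (v,z)/(v,v)) v` associated to a
bilinear form `B` and a vector `v`.  (When `B v v = 0` this is the identity, by the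
`division by zero = 0` convention; reflections are only ever used at non-isotropic `v`.) -/
def srefl {V : Type*} [AddCommGroup V] [Module ℝ V]
    (B : LinearMap.BilinForm ℝ V) (v : V) : Module.End ℝ V :=
  LinearMap.id - (((2 * (B v v)⁻¹) • (B v)).smulRight v)

/-- The Weyl group `W_S` generated by the reflections in the elements of `S`
(realized as the multiplicative closure; each generator is an involution, so this
agrees with the generated group). -/
def weyl {V : Type*} [AddCommGroup V] [Module ℝ V]
    (B : LinearMap.BilinForm ℝ V) (S : Set V) : Submonoid (Module.End ℝ V) :=
  Submonoid.closure (srefl B '' S)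

/-- The orbit `W_S · α`. -/
def worbit {V : Type*} [AddCommGroup V] [Module ℝ V]
    (B : LinearMap.BilinForm ℝ V) (S : Set V) (α : V) : Set V :=
  {v | ∃ w ∈ weyl B S, w α = v}

/-- `V⁰`, the set of isotropic vectors. -/
def nullSet {V : Type*} [AddCommGroup V] [Module ℝ V]
    (B : LinearMap.BilinForm ℝ V) : Set V := {v | B v v = 0}

/-- `ℤR`, the subgroup of `V` generated by `R`. -/
def zspan {V : Type*} [AddCommGroup V] (R : Set V) : AddSubgroup V :=
  AddSubgroup.closure R

/-- `ℤ≥0 Π`, the set of nonnegative-integer linear combinations of elements of `Π`. -/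
def nnspan {V : Type*} [AddCommMonoid V] (P : Set V) : Set V :=
  (AddSubmonoid.closure P : Set V)

/-- `(R, V)` is an `n`-extended affine root system of rank `l` (K. Saito). -/
structure IsEARS {V : Type*} [AddCommGroup V] [Module ℝ V]
    (B : LinearMap.BilinForm ℝ V) (R : Set V) (l n : ℕ) : Prop where
  rank_pos : 1 ≤ l
  findim : FiniteDimensional ℝ V
  symm : ∀ u v, B u v = B v u
  posSemidef : ∀ v, 0 ≤ B v v
  dim_eq : Module.finrank ℝ V = l + n
  null_eq : nullSet B = (LinearMap.ker B : Set V)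
  dim_null : Module.finrank ℝ (LinearMap.ker B) = n
  /-- (AX1), first half -/
  root_nonisotropic : ∀ α ∈ R, B α α ≠ 0
  /-- (AX1), second half -/
  span_eq_top : Submodule.span ℝ R = ⊤
  /-- (AX2) -/
  free : Module.Free ℤ (zspan R)
  /-- (AX2) -/
  rank_eq : Module.finrank ℤ (zspan R) = l + n
  /-- (AX3): `(α^∨, β) ∈ ℤ` -/
  integral : ∀ α ∈ R, ∀ β ∈ R, ∃ m : ℤ, 2 * B α β = (m : ℝ) * B α α
  /-- (AX4) -/
  reflect : ∀ α ∈ R, srefl B α '' R = R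
  /-- (AX5) -/
  connected : ∀ S' ⊆ R, S'.Nonempty → S' ≠ R → ∃ x ∈ S', ∃ y ∈ R \ S', B x y ≠ 0

/-- `R` is reduced, i.e. `R ∩ 2R = ∅`. -/
def IsReducedRS {V : Type*} [AddCommGroup V] [Module ℝ V] (R : Set V) : Prop :=
  ∀ α ∈ R, (2 : ℤ) • α ∉ R

/-- `Π₀` is a base (with `m` elements) of the root system `R₀`:
`Π₀ ⊆ R₀`, `Π₀` consists of `m` linearly independent elements, and
`R₀ = (R₀ ∩ ℤ≥0 Π₀) ∪ (R₀ ∩ ℤ≤0 Π₀)`. -/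
def IsBaseSet {M : Type*} [AddCommGroup M] [Module ℝ M] (R₀ P₀ : Set M) (m : ℕ) : Prop :=
  P₀ ⊆ R₀ ∧ P₀.Finite ∧ P₀.ncard = m ∧
  LinearIndependent ℝ ((↑) : P₀ → M) ∧
  R₀ = (R₀ ∩ nnspan P₀) ∪ (R₀ ∩ (-(nnspan P₀)))

/-- The bilinear form induced on a quotient `V ⧸ W` by a form vanishing on `W`. -/
def quotForm {V : Type*} [AddCommGroup V] [Module ℝ V]
    (W : Submodule ℝ V) (B : LinearMap.BilinForm ℝ V)
    (h1 : ∀ w ∈ W, B w = 0) (h2 : ∀ v : V, ∀ w ∈ W, B v w = 0) :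
    LinearMap.BilinForm ℝ (V ⧸ W) :=
  Submodule.liftQ W
    { toFun := fun v => Submodule.liftQ W (B v) (fun w hw => LinearMap.mem_ker.mpr (h2 v w hw))
      map_add' := fun u v => by
        ext x
        simp
      map_smul' := fun c v => by
        ext x
        simp }
    (fun w hw => by
      simp only [LinearMap.mem_ker]
      ext x
      simp [h1 w hw])

end

/-- A fundamental-set `Π ∪ {a}` of a reduced elliptic root system `R` of rank `l`:
(FS1) `a ∈ (ℤR)⁰` and `(ℤR)⁰ = ℤa ⊕ ℤb` for some `b`;
(FS2) `|Π| = l+1`, `Π ⊆ R` and `π_a(Π)` is a base of the affine root system `π_a(R)`. -/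
def IsFundamentalSet {V : Type*} [AddCommGroup V] [Module ℝ V]
    (B : LinearMap.BilinForm ℝ V) (R : Set V) (l : ℕ) (P : Set V) (a : V) : Prop :=
  a ∈ zspan R ∧ B a a = 0 ∧
  (∃ b : V, b ∈ zspan R ∧ B b b = 0 ∧
    ((zspan R : Set V) ∩ nullSet B = {v | ∃ m n : ℤ, v = m • a + n • b}) ∧
    (∀ m n : ℤ, m • a + n • b = 0 → m = 0 ∧ n = 0)) ∧
  P ⊆ R ∧ P.Finite ∧ P.ncard = l + 1 ∧
  IsBaseSet ((Submodule.span ℝ {a}).mkQ '' R) ((Submodule.span ℝ {a}).mkQ '' P) (l + 1)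

/-- The subset `⋃_{ε=±1} ((εα + ℤ kα a) ∪ (2εα + gα·kα a))` of the plane `ℝα ⊕ ℝa`;
here `gα : Bool`, with `false` encoding `g(α) = ∅` and `true` encoding `g(α) = 2ℤ+1`. -/
def kgLine {V : Type*} [AddCommGroup V] (a α : V) (kα : ℕ) (gα : Bool) : Set V :=
  {v | ∃ ε m : ℤ, (ε = 1 ∨ ε = -1) ∧ v = ε • α + (m * kα) • a} ∪
  {v | gα = true ∧ ∃ ε m : ℤ, (ε = 1 ∨ ε = -1) ∧ Odd m ∧ v = (2 * ε) • α + (m * kα) • a}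

/-- `k : Π → ℕ` and `g : Π → {∅, 2ℤ+1}` are the maps associated to the fundamental-set
`Π ∪ {a}`, i.e. `R ∩ (ℝα ⊕ ℝa) = ⋃_{ε=±1} ((εα + ℤ k(α) a) ∪ (2εα + g(α)k(α)a))`. -/
def IsKG {V : Type*} [AddCommGroup V] [Module ℝ V]
    (R : Set V) (a : V) (P : Set V) (k : V → ℕ) (g : V → Bool) : Prop :=
  ∀ α ∈ P, 0 < k α ∧
    R ∩ (Submodule.span ℝ {α, a} : Set V) = kgLine a α (k α) (g α)

/-- `c(α) = 1` if `g(α) = ∅`, `c(α) = 2` if `g(α) = 2ℤ+1`. -/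
def cMap {V : Type*} (g : V → Bool) (α : V) : ℕ := if g α then 2 else 1

/-- `α* := c(α)·α + k(α)·a`. -/
def starMap {V : Type*} [AddCommGroup V] (a : V) (k : V → ℕ) (g : V → Bool) (α : V) : V :=
  (cMap g α : ℤ) • α + (k α : ℤ) • a

/-- `B₊ := {α, α* | α ∈ Π}`. -/
def bplus {V : Type*} [AddCommGroup V] (a : V) (P : Set V) (k : V → ℕ) (g : V → Bool) :
    Set V :=
  P ∪ (starMap a k g '' P)

/-- `B := B₊ ∪ (−B₊)`. -/
def bfull {V : Type*} [AddCommGroup V] (a : V) (P : Set V) (k : V → ℕ) (g : V → Bool) :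
    Set V :=
  bplus a P k g ∪ (-(bplus a P k g))

/-- The set `R(Π,k,g) = ⋃_{w ∈ W_Π} ⋃_{α ∈ Π} ((w(α) + ℤk(α)a) ∪ (w(2α) + g(α)k(α)a))`. -/
def kgUnion {V : Type*} [AddCommGroup V] [Module ℝ V]
    (B : LinearMap.BilinForm ℝ V) (P : Set V) (a : V) (k : V → ℕ) (g : V → Bool) :
    Set V :=
  {v | ∃ w ∈ weyl B P, ∃ α ∈ P,
    (∃ m : ℤ, v = w α + (m * k α) • a) ∨
    (g α = true ∧ ∃ m : ℤ, Odd m ∧ v = w ((2 : ℤ) • α) + (m * k α) • a)}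

/- ## Auxiliary lemmas -/

section AuxLemmas

variable {V : Type*} [AddCommGroup V] [Module ℝ V]

lemma srefl_apply (B : LinearMap.BilinForm ℝ V) (v x : V) :
    srefl B v x = x - ((2 * (B v v)⁻¹) * (B v x)) • v := by
  simp [srefl, LinearMap.sub_apply, LinearMap.smulRight_apply, mul_assoc]

lemma nnspan_nonneg {M : Type*} [AddCommMonoid M] [Module ℝ M] (S : Set M) (φ : M →ₗ[ℝ] ℝ)
    (h : ∀ s ∈ S, 0 ≤ φ s) : ∀ x ∈ nnspan S, 0 ≤ φ x := by
  intro x hx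
  induction hx using AddSubmonoid.closure_induction with
  | mem y hy => exact h y hy
  | zero => simp
  | add y z _ _ hy hz => rw [map_add]; exact add_nonneg hy hz

lemma nnspan_subset_span {M : Type*} [AddCommGroup M] [Module ℝ M] (S : Set M) :
    nnspan S ⊆ (Submodule.span ℝ S : Set M) := by
  intro x hx
  induction hx using AddSubmonoid.closure_induction with
  | mem y hy => exact Submodule.subset_span hy
  | zero => exact (Submodule.span ℝ S).zero_mem
  | add y z _ _ hy hz => exact (Submodule.span ℝ S).add_mem hy hz

lemma kg_extract {a α : V} {kα : ℕ} {gα : Bool}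
    (ha : ∀ z : ℤ, (z : ℝ) • a = 0 → z = 0)
    (hα : ∀ z c : ℤ, (z : ℝ) • α = (c : ℝ) • a → z = 0)
    {n : ℤ} (h : α + (n : ℝ) • a ∈ kgLine a α kα gα) : ∃ m : ℤ, n = m * kα := by
  rcases h with ⟨ε, m, hε, he⟩ | ⟨-, ε, m, hε, -, he⟩
  · have he' : α + (n : ℝ) • a = ((ε : ℝ)) • α + ((m * (kα:ℤ) : ℤ) : ℝ) • a := by
      rw [he, Int.cast_smul_eq_zsmul, Int.cast_smul_eq_zsmul]
    have key : ((1 - ε : ℤ) : ℝ) • α = ((m * (kα:ℤ) - n : ℤ) : ℝ) • a := by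
      push_cast
      have : α + (n : ℝ) • a - (((ε : ℝ)) • α + ((m * (kα:ℤ) : ℤ) : ℝ) • a) = 0 := by
        rw [he']; abel
      push_cast at this
      linear_combination (norm := module) this
    rcases hε with rfl | rfl
    · refine ⟨m, ?_⟩
      have h0 : ((m * (kα:ℤ) - n : ℤ) : ℝ) • a = 0 := by
        rw [← key]; norm_num
      have := ha _ h0
      omega
    · exfalso
      have := hα _ _ key
      omega
  · exfalso
    have he' : α + (n : ℝ) • a = ((2 * ε : ℤ) : ℝ) • α + ((m * (kα:ℤ) : ℤ) : ℝ) • a := by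
      rw [he, Int.cast_smul_eq_zsmul, Int.cast_smul_eq_zsmul]
    have key : ((1 - 2 * ε : ℤ) : ℝ) • α = ((m * (kα:ℤ) - n : ℤ) : ℝ) • a := by
      push_cast
      have : α + (n : ℝ) • a - (((2 * ε : ℤ) : ℝ) • α + ((m * (kα:ℤ) : ℤ) : ℝ) • a) = 0 := by
        rw [he']; abel
      push_cast at this
      linear_combination (norm := module) this
    have := hα _ _ key
    omega

lemma dual_functional {M : Type*} [AddCommGroup M] [Module ℝ M] {s : Set M}
    (hs : LinearIndependent ℝ ((↑) : s → M))
    {x : M} (hx : x ∈ s) :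
    ∃ φ : M →ₗ[ℝ] ℝ, φ x = 1 ∧ ∀ y ∈ s, y ≠ x → φ y = 0 := by
  classical
  have hsub : s ⊆ LinearIndepOn.extend (linearIndependent_subtype_iff.mp hs) (Set.subset_univ s) := LinearIndepOn.subset_extend (linearIndependent_subtype_iff.mp hs) _
  refine ⟨(Module.Basis.extend (linearIndependent_subtype_iff.mp hs)).coord ⟨x, hsub hx⟩, ?_, ?_⟩
  · have h1 : (Module.Basis.extend (linearIndependent_subtype_iff.mp hs)).coord ⟨x, hsub hx⟩ ((Module.Basis.extend (linearIndependent_subtype_iff.mp hs)) ⟨x, hsub hx⟩) = 1 := by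
      rw [Module.Basis.coord_apply, Module.Basis.repr_self_apply, if_pos rfl]
    rwa [Module.Basis.extend_apply_self] at h1
  · intro y hy hyx
    have h1 : (Module.Basis.extend (linearIndependent_subtype_iff.mp hs)).coord ⟨x, hsub hx⟩ ((Module.Basis.extend (linearIndependent_subtype_iff.mp hs)) ⟨y, hsub hy⟩) = 0 := by
      rw [Module.Basis.coord_apply, Module.Basis.repr_self_apply, if_neg]
      simp only [Subtype.mk.injEq]
      exact hyx
    rwa [Module.Basis.extend_apply_self] at h1

end AuxLemmas

lemma factor_pos {m n c : ℤ} (hn : 0 < n) (hc : 0 < c) (h : m * n = c) : 0 < m := by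
  nlinarith

lemma pos_factor_le {m n c : ℤ} (hm : 0 < m) (hn : 0 < n) (h : m * n = c) : n ≤ c := by
  nlinarith

section NoP4

variable {V : Type*} [AddCommGroup V] [Module ℝ V]

set_option maxHeartbeats 2000000 in
/-- If `(β^∨,·) = -2 (α^∨,·)` (the situation `(α^∨,β) = -4`, `(β^∨,α) = -1`), the root
system disconnects, contradicting (AX5), once the rank is at least 2. -/
lemma no_p4 (B : LinearMap.BilinForm ℝ V) (R : Set V) (l : ℕ) (hl : 2 ≤ l)
    (hsymm : ∀ u v, B u v = B v u)
    (hiso : ∀ x ∈ R, B x x ≠ 0)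
    (hint : ∀ x ∈ R, ∀ y ∈ R, ∃ m : ℤ, 2 * B x y = (m : ℝ) * B x x)
    (hrefl : ∀ v ∈ R, ∀ x ∈ R, srefl B v x ∈ R)
    (hconn : ∀ S' ⊆ R, S'.Nonempty → S' ≠ R → ∃ x ∈ S', ∃ y ∈ R \ S', B x y ≠ 0)
    (P : Set V) (a : V)
    (hPR : P ⊆ R) (hPfin : P.Finite) (hPcard : P.ncard = l + 1)
    (hbase : IsBaseSet ((Submodule.span ℝ {a}).mkQ '' R) ((Submodule.span ℝ {a}).mkQ '' P)
      (l + 1))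
    (α β : V) (hα : α ∈ P) (hβ : β ∈ P) (hαβ : α ≠ β)
    (hA : 0 < B α α)
    (hBa : B a = 0)
    (hβα : ∀ x, B β x = -2 * B α x) : False := by
  classical
  obtain ⟨hPsub, hPbarfin, hPbarcard, hli, hcover⟩ := hbase
  set W := Submodule.span ℝ ({a} : Set V) with hW
  set π := W.mkQ with hπ
  have hαR : α ∈ R := hPR hα
  have hβR : β ∈ R := hPR hβ
  -- basic values
  have hαβv : B α β = -2 * B α α := by rw [hsymm α β, hβα α]
  have hββv : B β β = 4 * B α α := by rw [hβα β, hαβv]; ring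
  -- injectivity of π on P
  have hinj : Set.InjOn π P := Set.injOn_of_ncard_image_eq (by rw [hPbarcard, hPcard]) hPfin
  -- dual functionals
  have hφ : ∀ γ ∈ P, ∃ φ : (V ⧸ W) →ₗ[ℝ] ℝ, φ (π γ) = 1 ∧
      ∀ γ' ∈ P, γ' ≠ γ → φ (π γ') = 0 := by
    intro γ hγ
    obtain ⟨φ, h1, h2⟩ := dual_functional hli (Set.mem_image_of_mem π hγ)
    exact ⟨φ, h1, fun γ' hγ' hne =>
      h2 (π γ') (Set.mem_image_of_mem π hγ') (fun h => hne (hinj hγ' hγ h))⟩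
  choose Φ hΦ1 hΦ0 using hφ
  have hΦnonneg : ∀ γ (hγ : γ ∈ P), ∀ s ∈ π '' P, 0 ≤ Φ γ hγ s := by
    intro γ hγ s hs
    obtain ⟨γ', hγ', rfl⟩ := hs
    rcases eq_or_ne γ' γ with rfl | hne
    · rw [hΦ1]; norm_num
    · rw [hΦ0 γ hγ γ' hγ' hne]
  -- a third simple root
  have hγ₀ : ∃ γ₀ ∈ P, γ₀ ≠ α ∧ γ₀ ≠ β := by
    by_contra h
    push_neg at h
    have hsub : P ⊆ {α, β} := by
      intro x hx
      rcases eq_or_ne x α with rfl | hxa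
      · exact Set.mem_insert _ _
      · exact Set.mem_insert_of_mem _ (h x hx hxa)
    have h1 := Set.ncard_le_ncard hsub ((Set.finite_singleton β).insert α)
    have h2 : ({α, β} : Set V).ncard ≤ 2 :=
      le_trans (Set.ncard_insert_le _ _) (by simp)
    omega
  obtain ⟨γ₀, hγ₀P, hγ₀α, hγ₀β⟩ := hγ₀
  set δ : V := (2 : ℝ) • α + β with hδ
  have hBαδ : B α δ = 0 := by
    rw [hδ, map_add, map_smul, smul_eq_mul, hαβv]; ring
  have hπδ : π δ = (2 : ℝ) • π α + π β := by rw [hδ, map_add, map_smul]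
  -- the translation step
  have hstep : ∀ x ∈ R, ∀ u : ℤ, B α x = (u : ℝ) * B α α →
      (x - (u : ℝ) • δ ∈ R ∧ x + (u : ℝ) • δ ∈ R) := by
    intro x hx u hux
    have hβx : B β x = -2 * ((u : ℝ) * B α α) := by rw [hβα, hux]
    constructor
    · have hy : srefl B α x = x - (2 * (u : ℝ)) • α := by
        rw [srefl_apply, hux]
        congr 2
        field_simp
      have hyR : srefl B α x ∈ R := hrefl α hαR x hx
      rw [hy] at hyR
      have hβy : B β (x - (2 * (u : ℝ)) • α) = 2 * ((u : ℝ) * B α α) := by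
        rw [map_sub, map_smul, smul_eq_mul, hβx, hβα α]; ring
      have hz : srefl B β (x - (2 * (u : ℝ)) • α) = x - (u : ℝ) • δ := by
        rw [srefl_apply, hβy, hββv, hδ]
        have hc : 2 * (4 * B α α)⁻¹ * (2 * ((u : ℝ) * B α α)) = (u : ℝ) := by
          field_simp; ring
        rw [hc]
        module
      have := hrefl β hβR _ hyR
      rwa [hz] at this
    · have hy : srefl B β x = x + (u : ℝ) • β := by
        rw [srefl_apply, hβx, hββv]
        have hc : 2 * (4 * B α α)⁻¹ * (-2 * ((u : ℝ) * B α α)) = -(u : ℝ) := by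
          field_simp; ring
        rw [hc]
        module
      have hyR : srefl B β x ∈ R := hrefl β hβR x hx
      rw [hy] at hyR
      have hαy : B α (x + (u : ℝ) • β) = -((u : ℝ) * B α α) := by
        rw [map_add, map_smul, smul_eq_mul, hux, hαβv]; ring
      have hz : srefl B α (x + (u : ℝ) • β) = x + (u : ℝ) • δ := by
        rw [srefl_apply, hαy, hδ]
        have hc : 2 * (B α α)⁻¹ * -((u : ℝ) * B α α) = -(2 * (u : ℝ)) := by
          field_simp
        rw [hc]
        module
      have := hrefl α hαR _ hyR
      rwa [hz] at this
  -- iterated translations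
  have hiter : ∀ x ∈ R, ∀ u : ℤ, B α x = (u : ℝ) * B α α → ∀ j : ℕ,
      ((x - ((j : ℝ) * (u : ℝ)) • δ ∈ R ∧ B α (x - ((j : ℝ) * (u : ℝ)) • δ) = (u : ℝ) * B α α)
      ∧ (x + ((j : ℝ) * (u : ℝ)) • δ ∈ R ∧
          B α (x + ((j : ℝ) * (u : ℝ)) • δ) = (u : ℝ) * B α α)) := by
    intro x hx u hux j
    induction j with
    | zero => simp [hux, hx]
    | succ j ih =>
      obtain ⟨⟨h1R, h1B⟩, ⟨h2R, h2B⟩⟩ := ih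
      have e1 : x - (((j + 1 : ℕ) : ℝ) * (u : ℝ)) • δ
          = (x - ((j : ℝ) * (u : ℝ)) • δ) - (u : ℝ) • δ := by
        push_cast
        module
      have e2 : x + (((j + 1 : ℕ) : ℝ) * (u : ℝ)) • δ
          = (x + ((j : ℝ) * (u : ℝ)) • δ) + (u : ℝ) • δ := by
        push_cast
        module
      refine ⟨⟨?_, ?_⟩, ?_, ?_⟩
      · rw [e1]; exact (hstep _ h1R u h1B).1
      · rw [e1, map_sub, map_smul, smul_eq_mul, hBαδ, h1B]; ring
      · rw [e2]; exact (hstep _ h2R u h2B).2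
      · rw [e2, map_add, map_smul, smul_eq_mul, hBαδ, h2B]; ring
  -- main contradiction engine
  have hmain : ∀ γ (hγ : γ ∈ P), γ ≠ α → γ ≠ β → ∀ x ∈ R, ∀ u : ℤ, u ≠ 0 →
      B α x = (u : ℝ) * B α α → 0 < Φ γ hγ (π x) → False := by
    intro γ hγ hγα hγβ x hx u hu hux hpos
    set cβ : ℝ := Φ β hβ (π x) with hcβ
    have hΦβδ : Φ β hβ (π δ) = 1 := by
      rw [hπδ, map_add, map_smul, hΦ1, hΦ0 β hβ α hα hαβ, smul_eq_mul]; ring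
    have hΦγδ : Φ γ hγ (π δ) = 0 := by
      rw [hπδ, map_add, map_smul, hΦ0 γ hγ α hα (Ne.symm hγα),
        hΦ0 γ hγ β hβ (Ne.symm hγβ), smul_eq_mul]; ring
    obtain ⟨n, hnge⟩ : ∃ n : ℕ, cβ + 1 ≤ (n : ℝ) := by
      obtain ⟨n, hn⟩ := exists_nat_gt cβ
      exact ⟨n + 1, by push_cast; linarith⟩
    obtain ⟨r', hr'R, hr'β, hr'γ⟩ : ∃ r', r' ∈ R ∧ Φ β hβ (π r') < 0 ∧
        Φ γ hγ (π r') = Φ γ hγ (π x) := by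
      have hπp : π (x + ((n : ℝ) * (u : ℝ)) • δ) = π x + ((n : ℝ) * (u : ℝ)) • π δ := by
        rw [map_add, map_smul]
      have hπm : π (x - ((n : ℝ) * (u : ℝ)) • δ) = π x - ((n : ℝ) * (u : ℝ)) • π δ := by
        rw [map_sub, map_smul]
      have hnn : (0 : ℝ) ≤ (n : ℝ) := Nat.cast_nonneg n
      rcases lt_or_gt_of_ne hu with h | h
      · have hu1 : ((u : ℤ) : ℝ) ≤ -1 := by exact_mod_cast (by omega : u ≤ -1)
        refine ⟨x + ((n : ℝ) * (u : ℝ)) • δ, (hiter x hx u hux n).2.1, ?_, ?_⟩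
        · rw [hπp, map_add, map_smul, smul_eq_mul, hΦβδ, ← hcβ]
          nlinarith
        · rw [hπp, map_add, map_smul, smul_eq_mul, hΦγδ]
          ring
      · have hu1 : (1 : ℝ) ≤ ((u : ℤ) : ℝ) := by exact_mod_cast (by omega : 1 ≤ u)
        refine ⟨x - ((n : ℝ) * (u : ℝ)) • δ, (hiter x hx u hux n).1.1, ?_, ?_⟩
        · rw [hπm, map_sub, map_smul, smul_eq_mul, hΦβδ, ← hcβ]
          nlinarith
        · rw [hπm, map_sub, map_smul, smul_eq_mul, hΦγδ]
          ring
    have himg : π r' ∈ π '' R := Set.mem_image_of_mem _ hr'R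
    rw [hcover] at himg
    rcases himg with h | h
    · have := nnspan_nonneg _ (Φ β hβ) (hΦnonneg β hβ) _ h.2
      linarith
    · have hneg : -(π r') ∈ nnspan (π '' P) := Set.mem_neg.mp h.2
      have := nnspan_nonneg _ (Φ γ hγ) (hΦnonneg γ hγ) _ hneg
      rw [map_neg] at this
      rw [hr'γ] at this
      linarith
  -- L1 : roots non-orthogonal to α live in the (α, β, a)-plane
  have hL1 : ∀ x ∈ R, B α x ≠ 0 → π x ∈ Submodule.span ℝ {π α, π β} := by
    intro x hx hBx
    obtain ⟨m, hm⟩ := hint β hβR x hx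
    rw [hβα x, hββv] at hm
    have hux : B α x = ((-m : ℤ) : ℝ) * B α α := by push_cast; linarith
    have hu0 : (-m : ℤ) ≠ 0 := by
      intro h
      rw [h] at hux
      push_cast at hux
      exact hBx (by linarith)
    by_contra hns
    have hγ' : ∃ γ', ∃ hγ'P : γ' ∈ P, γ' ≠ α ∧ γ' ≠ β ∧ Φ γ' hγ'P (π x) ≠ 0 := by
      by_contra hall
      push_neg at hall
      apply hns
      have hxspan : π x ∈ Submodule.span ℝ (π '' P) := by
        have himg : π x ∈ π '' R := Set.mem_image_of_mem _ hx
        rw [hcover] at himg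
        rcases himg with h | h
        · exact nnspan_subset_span _ h.2
        · have h1 := nnspan_subset_span _ (Set.mem_neg.mp h.2)
          have h2 := Submodule.neg_mem (Submodule.span ℝ (π '' P)) h1
          simpa using h2
      set T := hPbarfin.toFinset with hT
      have hTcoe : (T : Set (V ⧸ W)) = π '' P := hPbarfin.coe_toFinset
      rw [← hTcoe] at hxspan
      obtain ⟨f, -, hf⟩ := Submodule.mem_span_finset.mp hxspan
      have hmemT : ∀ q ∈ T, ∃ γ'' ∈ P, π γ'' = q := by
        intro q hq
        have : q ∈ π '' P := by rw [← hTcoe]; exact_mod_cast hq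
        obtain ⟨γ'', h1, h2⟩ := this
        exact ⟨γ'', h1, h2⟩
      have hfz : ∀ γ' ∈ P, γ' ≠ α → γ' ≠ β → f (π γ') = 0 := by
        intro γ' hγ'P hne1 hne2
        have h0 : Φ γ' hγ'P (π x) = 0 := hall γ' hγ'P hne1 hne2
        rw [← hf, map_sum] at h0
        rw [Finset.sum_eq_single (π γ')] at h0
        · rw [map_smul, hΦ1, smul_eq_mul, mul_one] at h0; exact h0
        · intro q hq hqne
          obtain ⟨γ'', hγ''P, rfl⟩ := hmemT q hq
          rw [map_smul, hΦ0 γ' hγ'P γ'' hγ''P (fun h => hqne (by rw [h])), smul_eq_mul,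
            mul_zero]
        · intro hnotin
          exfalso
          apply hnotin
          rw [hT, Set.Finite.mem_toFinset]
          exact Set.mem_image_of_mem _ hγ'P
      rw [← hf]
      apply Submodule.sum_mem
      intro q hq
      obtain ⟨γ'', hγ''P, rfl⟩ := hmemT q hq
      rcases eq_or_ne γ'' α with rfl | h1
      · exact Submodule.smul_mem _ _ (Submodule.subset_span (Set.mem_insert _ _))
      rcases eq_or_ne γ'' β with rfl | h2
      · exact Submodule.smul_mem _ _ (Submodule.subset_span (Set.mem_insert_of_mem _ rfl))
      · rw [hfz γ'' hγ''P h1 h2, zero_smul]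
        exact Submodule.zero_mem _
    obtain ⟨γ', hγ'P, hne1, hne2, hval⟩ := hγ'
    rcases lt_or_gt_of_ne hval with hneg | hpos
    · have hnegx : -x ∈ R := by
        have h := hrefl x hx x hx
        rw [srefl_apply] at h
        have hc : (2 * (B x x)⁻¹ * B x x) = 2 := by field_simp [hiso x hx]
        rw [hc] at h
        have he : x - (2 : ℝ) • x = -x := by module
        rwa [he] at h
      have hBnx : B α (-x) = ((m : ℤ) : ℝ) * B α α := by
        rw [map_neg, hux]; push_cast; ring
      have hm0 : (m : ℤ) ≠ 0 := fun h => hu0 (by omega)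
      have hΦnx : 0 < Φ γ' hγ'P (π (-x)) := by
        rw [map_neg, map_neg]
        linarith
      exact hmain γ' hγ'P hne1 hne2 (-x) hnegx m hm0 hBnx hΦnx
    · exact hmain γ' hγ'P hne1 hne2 x hx (-m) hu0 hux hpos
  -- L2 : other simple roots are orthogonal to α
  have hL2 : ∀ γ ∈ P, γ ≠ α → γ ≠ β → B α γ = 0 := by
    intro γ hγ h1 h2
    by_contra hBγ
    obtain ⟨c, d, hcd⟩ := Submodule.mem_span_pair.mp (hL1 γ (hPR hγ) hBγ)
    have h3 := hΦ1 γ hγ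
    rw [← hcd, map_add, map_smul, map_smul, hΦ0 γ hγ α hα (Ne.symm h1),
      hΦ0 γ hγ β hβ (Ne.symm h2), smul_eq_mul, smul_eq_mul, mul_zero, mul_zero] at h3
    norm_num at h3
  -- final disconnection contradiction
  set S' : Set V := {x | x ∈ R ∧ B α x ≠ 0} with hS'
  have hsub : S' ⊆ R := fun x hx => hx.1
  have hSne : S'.Nonempty := ⟨α, hαR, ne_of_gt hA⟩
  have hproper : S' ≠ R := by
    intro h
    have hmem : γ₀ ∈ S' := by rw [h]; exact hPR hγ₀P
    exact hmem.2 (hL2 γ₀ hγ₀P hγ₀α hγ₀β)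
  obtain ⟨x, hxS, y, hyRS, hBxy⟩ := hconn S' hsub hSne hproper
  have hyα : B α y = 0 := by
    by_contra h
    exact hyRS.2 ⟨hyRS.1, h⟩
  obtain ⟨c, d, hcd⟩ := Submodule.mem_span_pair.mp (hL1 x hxS.1 hxS.2)
  have hker : π (x - c • α - d • β) = 0 := by
    rw [map_sub, map_sub, map_smul, map_smul, ← hcd]; abel
  have hmem : x - c • α - d • β ∈ W := by
    have := LinearMap.mem_ker.mpr hker
    rwa [hπ, Submodule.ker_mkQ] at this
  obtain ⟨s, hs⟩ := Submodule.mem_span_singleton.mp (by rwa [hW] at hmem)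
  have hxeq : x = c • α + d • β + s • a := by
    rw [hs]; module
  apply hBxy
  have hcomp : B x y = c * B α y + d * B β y + s * B a y := by
    rw [hxeq]
    simp [map_add, map_smul, LinearMap.add_apply, LinearMap.smul_apply, smul_eq_mul]
  rw [hcomp, hyα, hβα y, hyα, hBa]
  simp

end NoP4

set_option maxHeartbeats 2000000 in

/-- For `α, β ∈ Π` with `(β^∨, α) = −1` in a reduced elliptic root
system of rank `≥ 2`: `g(β) = ∅`, `k(α) ∣ k(β)`, and
`((α^∨,β), k(β)/k(α), g(α))` is one of
`(−1,1,∅), (−2,1,∅), (−3,1,∅), (−2,2,∅), (−3,3,∅), (−2,1,2ℤ+1)`. -/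
theorem stmt11 {V : Type*} [AddCommGroup V] [Module ℝ V]
    (B : LinearMap.BilinForm ℝ V) (R : Set V) (l : ℕ) (hl : 2 ≤ l)
    (hE : IsEARS B R l 2) (hred : IsReducedRS R)
    (P : Set V) (a : V) (hfs : IsFundamentalSet B R l P a)
    (k : V → ℕ) (g : V → Bool) (hkg : IsKG R a P k g)
    (α β : V) (hα : α ∈ P) (hβ : β ∈ P)
    (hpair : 2 * B β α = -(B β β)) :
    g β = false ∧ k α ∣ k β ∧
      ((2 * B α β = -(1 : ℝ) * B α α ∧ k β = 1 * k α ∧ g α = false) ∨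
       (2 * B α β = -(2 : ℝ) * B α α ∧ k β = 1 * k α ∧ g α = false) ∨
       (2 * B α β = -(3 : ℝ) * B α α ∧ k β = 1 * k α ∧ g α = false) ∨
       (2 * B α β = -(2 : ℝ) * B α α ∧ k β = 2 * k α ∧ g α = false) ∨
       (2 * B α β = -(3 : ℝ) * B α α ∧ k β = 3 * k α ∧ g α = false) ∨
       (2 * B α β = -(2 : ℝ) * B α α ∧ k β = 1 * k α ∧ g α = true)) := by
  classical
  obtain ⟨haR, haa, ⟨b, hbR, hbb, hnullset, hfree⟩, hPR, hPfin, hPcard, hbase⟩ := hfs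
  obtain ⟨hkαpos, hlineα⟩ := hkg α hα
  obtain ⟨hkβpos, hlineβ⟩ := hkg β hβ
  have hsymm := hE.symm
  have hαR : α ∈ R := hPR hα
  have hβR : β ∈ R := hPR hβ
  have hA : 0 < B α α :=
    lt_of_le_of_ne (hE.posSemidef α) (Ne.symm (hE.root_nonisotropic α hαR))
  have hC : 0 < B β β :=
    lt_of_le_of_ne (hE.posSemidef β) (Ne.symm (hE.root_nonisotropic β hβR))
  -- the kernel vector a
  have hBa : B a = 0 := by
    have h1 : a ∈ nullSet B := haa
    rw [hE.null_eq] at h1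
    exact LinearMap.mem_ker.mp h1
  have hBax : ∀ x, B a x = 0 := fun x => by rw [hBa]; rfl
  have hBxa : ∀ x, B x a = 0 := fun x => by rw [hsymm x a, hBax]
  have ha0 : a ≠ 0 := by
    intro h
    have h2 := (hfree 1 0 (by rw [h]; simp)).1
    omega
  have hZa : ∀ z : ℤ, (z : ℝ) • a = 0 → z = 0 := by
    intro z hz
    rcases smul_eq_zero.mp hz with h | h
    · exact_mod_cast h
    · exact absurd h ha0
  have hZα : ∀ z c : ℤ, (z : ℝ) • α = (c : ℝ) • a → z = 0 := by
    intro z c hz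
    have h1 : B α ((z : ℝ) • α) = (z : ℝ) * B α α := by rw [map_smul, smul_eq_mul]
    have h2 : B α ((c : ℝ) • a) = 0 := by rw [map_smul, smul_eq_mul, hBxa, mul_zero]
    rw [hz, h2] at h1
    have h3 : (z : ℝ) = 0 := by
      rcases mul_eq_zero.mp h1.symm with h | h
      · exact h
      · exact absurd h (ne_of_gt hA)
    exact_mod_cast h3
  have hZβ : ∀ z c : ℤ, (z : ℝ) • β = (c : ℝ) • a → z = 0 := by
    intro z c hz
    have h1 : B β ((z : ℝ) • β) = (z : ℝ) * B β β := by rw [map_smul, smul_eq_mul]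
    have h2 : B β ((c : ℝ) • a) = 0 := by rw [map_smul, smul_eq_mul, hBxa, mul_zero]
    rw [hz, h2] at h1
    have h3 : (z : ℝ) = 0 := by
      rcases mul_eq_zero.mp h1.symm with h | h
      · exact h
      · exact absurd h (ne_of_gt hC)
    exact_mod_cast h3
  have hrefl : ∀ v ∈ R, ∀ x ∈ R, srefl B v x ∈ R := by
    intro v hv x hx
    have h1 := hE.reflect v hv
    rw [← h1]
    exact Set.mem_image_of_mem _ hx
  -- the integer p = (α^∨, β)
  obtain ⟨p, hp⟩ := hE.integral α hαR β hβR
  have hβα' : B β α = B α β := hsymm β α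
  have hCval : B β β = -(p : ℝ) * B α α := by
    rw [hβα'] at hpair
    linarith [hp]
  have hpneg : p < 0 := by
    have h1 : 0 < -(p : ℝ) * B α α := hCval ▸ hC
    have h2 : (p : ℝ) < 0 := by nlinarith
    exact_mod_cast h2
  have hαβ : α ≠ β := by
    intro h
    rw [h] at hpair
    nlinarith [hpair, hC]
  -- Cauchy–Schwarz and -4 ≤ p
  have hCS : (B α β) ^ 2 ≤ B α α * B β β := by
    have hps := hE.posSemidef (α + (-(B α β) / B β β) • β)
    have hexp : B (α + (-(B α β) / B β β) • β) (α + (-(B α β) / B β β) • β)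
        = B α α + 2 * (-(B α β) / B β β) * B α β + (-(B α β) / B β β) ^ 2 * B β β := by
      simp only [map_add, map_smul, LinearMap.add_apply, LinearMap.smul_apply, smul_eq_mul,
        hβα']
      ring
    rw [hexp] at hps
    have hC0 : B β β ≠ 0 := ne_of_gt hC
    have he2 : B α α + 2 * (-(B α β) / B β β) * B α β + (-(B α β) / B β β) ^ 2 * B β β
        = B α α - (B α β) ^ 2 / B β β := by
      field_simp
      ring
    rw [he2] at hps
    have h2 : (B α β) ^ 2 / B β β ≤ B α α := by linarith
    calc (B α β) ^ 2 = ((B α β) ^ 2 / B β β) * B β β := by field_simp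
    _ ≤ B α α * B β β := mul_le_mul_of_nonneg_right h2 (le_of_lt hC)
  have hp4 : -4 ≤ p := by
    have hX : B α β = (p : ℝ) * B α α / 2 := by linarith
    have h1 : (p : ℝ) ^ 2 + 4 * (p : ℝ) ≤ 0 := by
      nlinarith [hCS, hX, hCval, mul_pos hA hA, hA]
    have h2 : (p : ℤ) ^ 2 + 4 * p ≤ 0 := by exact_mod_cast h1
    nlinarith [h2]
  -- exclude p = -4
  have hpne4 : p ≠ -4 := by
    intro hpe
    have hX4 : B α β = -2 * B α α := by
      rw [hpe] at hp
      push_cast at hp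
      linarith
    have hδnull : B ((2 : ℝ) • α + β) ((2 : ℝ) • α + β) = 0 := by
      simp only [map_add, map_smul, LinearMap.add_apply, LinearMap.smul_apply, smul_eq_mul,
        hβα']
      rw [hpe] at hCval
      push_cast at hCval
      nlinarith [hX4, hCval]
    have hδker : ((2 : ℝ) • α + β) ∈ LinearMap.ker B := by
      have h1 : ((2 : ℝ) • α + β) ∈ nullSet B := hδnull
      rwa [hE.null_eq] at h1
    have hδ0 : B ((2 : ℝ) • α + β) = 0 := LinearMap.mem_ker.mp hδker
    have hβfun : ∀ x, B β x = -2 * B α x := by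
      intro x
      have h1 : B ((2 : ℝ) • α + β) x = 0 := by rw [hδ0]; rfl
      rw [map_add, map_smul] at h1
      simp only [LinearMap.add_apply, LinearMap.smul_apply, smul_eq_mul] at h1
      linarith
    exact no_p4 B R l hl hsymm hE.root_nonisotropic hE.integral hrefl hE.connected
      P a hPR hPfin hPcard hbase α β hα hβ hαβ hA hBa hβfun
  have hpcases : p = -1 ∨ p = -2 ∨ p = -3 := by omega
  -- the roots α + k(α) a and β + k(β) a
  have hγαR : α + ((k α : ℕ) : ℝ) • a ∈ R := by
    have hm : α + ((k α : ℕ) : ℝ) • a ∈ kgLine a α (k α) (g α) := by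
      left
      refine ⟨1, 1, Or.inl rfl, ?_⟩
      rw [one_zsmul]
      congr 1
      rw [← Int.cast_smul_eq_zsmul ℝ]
      push_cast
      ring_nf
    have h2 : α + ((k α : ℕ) : ℝ) • a ∈ R ∩ (Submodule.span ℝ {α, a} : Set V) := by
      rw [hlineα]; exact hm
    exact h2.1
  have hγβR : β + ((k β : ℕ) : ℝ) • a ∈ R := by
    have hm : β + ((k β : ℕ) : ℝ) • a ∈ kgLine a β (k β) (g β) := by
      left
      refine ⟨1, 1, Or.inl rfl, ?_⟩
      rw [one_zsmul]
      congr 1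
      rw [← Int.cast_smul_eq_zsmul ℝ]
      push_cast
      ring_nf
    have h2 : β + ((k β : ℕ) : ℝ) • a ∈ R ∩ (Submodule.span ℝ {β, a} : Set V) := by
      rw [hlineβ]; exact hm
    exact h2.1
  -- extraction from the kgLine structure
  have hextα : ∀ n : ℤ, α + (n : ℝ) • a ∈ R → ∃ m : ℤ, n = m * (k α) := by
    intro n hmem
    have hsp : α + (n : ℝ) • a ∈ (Submodule.span ℝ ({α, a} : Set V) : Submodule ℝ V) :=
      Submodule.add_mem _ (Submodule.subset_span (Set.mem_insert _ _))
        (Submodule.smul_mem _ _ (Submodule.subset_span (Set.mem_insert_of_mem _ rfl)))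
    have hm : α + (n : ℝ) • a ∈ kgLine a α (k α) (g α) := by
      rw [← hlineα]; exact ⟨hmem, hsp⟩
    exact kg_extract hZa hZα hm
  have hextβ : ∀ n : ℤ, β + (n : ℝ) • a ∈ R → ∃ m : ℤ, n = m * (k β) := by
    intro n hmem
    have hsp : β + (n : ℝ) • a ∈ (Submodule.span ℝ ({β, a} : Set V) : Submodule ℝ V) :=
      Submodule.add_mem _ (Submodule.subset_span (Set.mem_insert _ _))
        (Submodule.smul_mem _ _ (Submodule.subset_span (Set.mem_insert_of_mem _ rfl)))
    have hm : β + (n : ℝ) • a ∈ kgLine a β (k β) (g β) := by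
      rw [← hlineβ]; exact ⟨hmem, hsp⟩
    exact kg_extract hZa hZβ hm
  -- translations
  have htransl : ∀ v, v ∈ R → ∀ n : ℝ, v + n • a ∈ R → ∀ x, x ∈ R →
      x - (2 * (B v v)⁻¹ * B v x * n) • a ∈ R := by
    intro v hv n hva x hx
    have hvv : B (v + n • a) (v + n • a) = B v v := by
      simp only [map_add, map_smul, LinearMap.add_apply, LinearMap.smul_apply, smul_eq_mul,
        hBax, hBxa]
      ring
    have hvx : B (v + n • a) x = B v x := by
      simp only [map_add, map_smul, LinearMap.add_apply, LinearMap.smul_apply, smul_eq_mul,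
        hBax]
      ring
    have h1 : srefl B (v + n • a) x = x - (2 * (B v v)⁻¹ * B v x) • (v + n • a) := by
      rw [srefl_apply, hvv, hvx]
    have h2 := hrefl _ hva x hx
    rw [h1] at h2
    have h3 := hrefl v hv _ h2
    rw [srefl_apply] at h3
    have hBv : B v (x - (2 * (B v v)⁻¹ * B v x) • (v + n • a))
        = B v x - (2 * (B v v)⁻¹ * B v x) * B v v := by
      rw [map_sub, map_smul, smul_eq_mul, map_add, map_smul, smul_eq_mul, hBxa, mul_zero,
        add_zero]
    rw [hBv] at h3
    have hvv0 : B v v ≠ 0 := hE.root_nonisotropic v hv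
    have he : x - (2 * (B v v)⁻¹ * B v x) • (v + n • a)
        - (2 * (B v v)⁻¹ * (B v x - 2 * (B v v)⁻¹ * B v x * B v v)) • v
        = x - (2 * (B v v)⁻¹ * B v x * n) • a := by
      have hsimp : 2 * (B v v)⁻¹ * (B v x - 2 * (B v v)⁻¹ * B v x * B v v)
          = -(2 * (B v v)⁻¹ * B v x) := by
        field_simp
        ring
      rw [hsimp]
      module
    rwa [he] at h3
  -- k(α) divides k(β)
  have hstep1 : α + (((k β : ℤ) : ℝ)) • a ∈ R := by
    have h := htransl β hβR ((k β : ℕ) : ℝ) hγβR α hαR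
    have hc : 2 * (B β β)⁻¹ * B β α * ((k β : ℕ) : ℝ) = -((k β : ℕ) : ℝ) := by
      have h2 : 2 * B β α = -(B β β) := hpair
      field_simp
      nlinarith [h2]
    rw [hc] at h
    have he : α - (-((k β : ℕ) : ℝ)) • a = α + (((k β : ℤ) : ℝ)) • a := by
      push_cast
      module
    rwa [he] at h
  obtain ⟨m₂, hm₂⟩ := hextα (k β : ℤ) hstep1
  have hm₂pos : 0 < m₂ := by
    rcases le_or_gt m₂ 0 with h | h
    · exfalso
      have h1 : (k β : ℤ) ≤ 0 := by
        calc (k β : ℤ) = m₂ * (k α : ℤ) := hm₂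
        _ ≤ 0 := mul_nonpos_of_nonpos_of_nonneg h (by positivity)
      omega
    · exact h
  -- m₃ : the "dual" translation
  have hstep2 : β + (((-p * (k α : ℤ) : ℤ)) : ℝ) • a ∈ R := by
    have h := htransl α hαR ((k α : ℕ) : ℝ) hγαR β hβR
    have hc : 2 * (B α α)⁻¹ * B α β * ((k α : ℕ) : ℝ) = (p : ℝ) * ((k α : ℕ) : ℝ) := by
      field_simp
      nlinarith [hp]
    rw [hc] at h
    have he : β - ((p : ℝ) * ((k α : ℕ) : ℝ)) • a = β + (((-p * (k α : ℤ) : ℤ)) : ℝ) • a := by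
      push_cast
      module
    rwa [he] at h
  obtain ⟨m₃, hm₃⟩ := hextβ (-p * (k α : ℤ)) hstep2
  have hm₃m₂ : m₃ * m₂ = -p := by
    have h1 : -p * (k α : ℤ) = m₃ * (m₂ * (k α : ℤ)) := by rw [← hm₂]; exact hm₃
    have h2 : (-p) * (k α : ℤ) = (m₃ * m₂) * (k α : ℤ) := by rw [h1]; ring
    have hk0 : (k α : ℤ) ≠ 0 := by
      have := hkαpos; omega
    exact (mul_right_cancel₀ hk0 h2).symm
  have hm₃pos : 0 < m₃ := by
    rcases le_or_gt m₃ 0 with h | h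
    · exfalso
      have h1 : m₃ * m₂ ≤ 0 := mul_nonpos_of_nonpos_of_nonneg h (by omega)
      omega
    · exact h
  -- g β = false
  have hgβ : g β = false := by
    by_contra h
    have hgt : g β = true := by revert h; cases g β <;> simp
    have hroot : (2 : ℝ) • β + ((k β : ℕ) : ℝ) • a ∈ R := by
      have hm : (2 : ℝ) • β + ((k β : ℕ) : ℝ) • a ∈ kgLine a β (k β) (g β) := by
        right
        refine ⟨hgt, 1, 1, Or.inl rfl, odd_one, ?_⟩
        congr 1
        · rw [← Int.cast_smul_eq_zsmul ℝ]; norm_num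
        · rw [← Int.cast_smul_eq_zsmul ℝ]; push_cast; ring_nf
      have h2 : (2 : ℝ) • β + ((k β : ℕ) : ℝ) • a ∈ R ∩ (Submodule.span ℝ {β, a} : Set V) := by
        rw [hlineβ]; exact hm
      exact h2.1
    obtain ⟨m', hm'⟩ := hE.integral _ hroot α hαR
    have h1 : B ((2 : ℝ) • β + ((k β : ℕ) : ℝ) • a) α = 2 * B β α := by
      simp only [map_add, map_smul, LinearMap.add_apply, LinearMap.smul_apply, smul_eq_mul,
        hBax]
      ring
    have h2 : B ((2 : ℝ) • β + ((k β : ℕ) : ℝ) • a) ((2 : ℝ) • β + ((k β : ℕ) : ℝ) • a)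
        = 4 * B β β := by
      simp only [map_add, map_smul, LinearMap.add_apply, LinearMap.smul_apply, smul_eq_mul,
        hBax, hBxa]
      ring
    rw [h1, h2] at hm'
    -- 2 * (2 B β α) = m' * 4 B β β with 2 B β α = -B β β
    have h3 : (-2 : ℝ) * B β β = (m' : ℝ) * (4 * B β β) := by
      rw [← hm']
      nlinarith [hpair]
    have h4 : (-2 : ℝ) = 4 * (m' : ℝ) := by
      have hC0 : B β β ≠ 0 := ne_of_gt hC
      field_simp at h3
      nlinarith [h3, hC]
    have h5 : (-2 : ℤ) = 4 * m' := by exact_mod_cast h4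
    omega
  -- consequences of g α = true
  have hgαp : g α = true → p = -2 ∧ m₂ = 1 := by
    intro hgt
    have hroot : (2 : ℝ) • α + ((k α : ℕ) : ℝ) • a ∈ R := by
      have hm : (2 : ℝ) • α + ((k α : ℕ) : ℝ) • a ∈ kgLine a α (k α) (g α) := by
        right
        refine ⟨hgt, 1, 1, Or.inl rfl, odd_one, ?_⟩
        congr 1
        · rw [← Int.cast_smul_eq_zsmul ℝ]; norm_num
        · rw [← Int.cast_smul_eq_zsmul ℝ]; push_cast; ring_nf
      have h2 : (2 : ℝ) • α + ((k α : ℕ) : ℝ) • a ∈ R ∩ (Submodule.span ℝ {α, a} : Set V) := by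
        rw [hlineα]; exact hm
      exact h2.1
    -- parity of p
    obtain ⟨m5, hm5⟩ := hE.integral _ hroot β hβR
    have h1 : B ((2 : ℝ) • α + ((k α : ℕ) : ℝ) • a) β = 2 * B α β := by
      simp only [map_add, map_smul, LinearMap.add_apply, LinearMap.smul_apply, smul_eq_mul,
        hBax]
      ring
    have h2 : B ((2 : ℝ) • α + ((k α : ℕ) : ℝ) • a) ((2 : ℝ) • α + ((k α : ℕ) : ℝ) • a)
        = 4 * B α α := by
      simp only [map_add, map_smul, LinearMap.add_apply, LinearMap.smul_apply, smul_eq_mul,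
        hBax, hBxa]
      ring
    rw [h1, h2] at hm5
    have h3 : (p : ℝ) = 2 * (m5 : ℝ) := by
      have hA0 : B α α ≠ 0 := ne_of_gt hA
      nlinarith [hm5, hp, hA]
    have h4 : p = 2 * m5 := by exact_mod_cast h3
    have hpe : p = -2 := by omega
    refine ⟨hpe, ?_⟩
    -- the reflection chain producing β + k(α) a ∈ R
    have hX : B α β = -(B α α) := by
      rw [hpe] at hp; push_cast at hp; linarith
    have hBβαv : B β α = -(B α α) := by rw [hβα', hX]
    have hCv : B β β = 2 * B α α := by
      rw [hpe] at hCval; push_cast at hCval; linarith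
    have hA0 : B α α ≠ 0 := ne_of_gt hA
    set x₁ : V := (2 : ℝ) • α + ((k α : ℕ) : ℝ) • a with hx₁def
    set x₂ : V := (2 : ℝ) • α + (2 : ℝ) • β + ((k α : ℕ) : ℝ) • a with hx₂def
    have hBβx₁ : B β x₁ = -2 * B α α := by
      rw [hx₁def]
      simp only [map_add, map_smul, LinearMap.add_apply, smul_eq_mul, hBax, hBβαv, hBxa]
      ring
    have hx₂R : x₂ ∈ R := by
      have h5 := hrefl β hβR x₁ hroot
      have he : srefl B β x₁ = x₂ := by
        rw [srefl_apply, hBβx₁, hCv]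
        have hc : 2 * (2 * B α α)⁻¹ * (-2 * B α α) = -2 := by field_simp <;> ring
        rw [hc, hx₁def, hx₂def]
        module
      rwa [he] at h5
    have hBx₂x₂ : B x₂ x₂ = 4 * B α α := by
      rw [hx₂def]
      simp only [map_add, map_smul, LinearMap.add_apply, LinearMap.smul_apply, smul_eq_mul,
        hBax, hBxa, hX, hBβαv, hCv]
      ring
    have hBx₂β : B x₂ β = 2 * B α α := by
      rw [hx₂def]
      simp only [map_add, map_smul, LinearMap.add_apply, LinearMap.smul_apply, smul_eq_mul,
        hBax, hX, hCv]
      ring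
    set x₃ : V := β - x₂ with hx₃def
    have hx₃R : x₃ ∈ R := by
      have h5 := hrefl x₂ hx₂R β hβR
      have he : srefl B x₂ β = x₃ := by
        rw [srefl_apply, hBx₂x₂, hBx₂β]
        have hc : 2 * (4 * B α α)⁻¹ * (2 * B α α) = 1 := by field_simp <;> ring
        rw [hc, one_smul, hx₃def]
      rwa [he] at h5
    have hBx₃x₃ : B x₃ x₃ = 2 * B α α := by
      rw [hx₃def]
      simp only [map_sub, map_add, map_smul, LinearMap.sub_apply, LinearMap.add_apply,
        LinearMap.smul_apply, smul_eq_mul, hBax, hBxa, hX, hBβαv, hCv, hx₂def]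
      ring
    set x₄ : V := x₂ - β with hx₄def
    have hx₄R : x₄ ∈ R := by
      have h5 := hrefl x₃ hx₃R x₃ hx₃R
      have he : srefl B x₃ x₃ = x₄ := by
        rw [srefl_apply, hBx₃x₃]
        have hc : 2 * (2 * B α α)⁻¹ * (2 * B α α) = 2 := by field_simp <;> ring
        rw [hc, hx₄def, hx₃def]
        module
      rwa [he] at h5
    have hBαx₄ : B α x₄ = B α α := by
      rw [hx₄def, hx₂def]
      simp only [map_sub, map_add, map_smul, LinearMap.sub_apply, LinearMap.add_apply,
        LinearMap.smul_apply, smul_eq_mul, hBxa, hX]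
      ring
    have hx₅R : β + (((k α : ℤ)) : ℝ) • a ∈ R := by
      have h5 := hrefl α hαR x₄ hx₄R
      have he : srefl B α x₄ = β + (((k α : ℤ)) : ℝ) • a := by
        rw [srefl_apply, hBαx₄]
        have hc : 2 * (B α α)⁻¹ * B α α = 2 := by field_simp <;> ring
        rw [hc, hx₄def, hx₂def]
        push_cast
        module
      rwa [he] at h5
    obtain ⟨m₄, hm₄⟩ := hextβ (k α : ℤ) hx₅R
    -- k α = m₄ k β, k β = m₂ k α
    have h6 : (k α : ℤ) = m₄ * m₂ * (k α : ℤ) := by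
      calc (k α : ℤ) = m₄ * (k β : ℤ) := hm₄
      _ = m₄ * (m₂ * (k α : ℤ)) := by rw [← hm₂]
      _ = m₄ * m₂ * (k α : ℤ) := by ring
    have hk0 : (k α : ℤ) ≠ 0 := by have := hkαpos; omega
    have h7 : m₄ * m₂ = 1 := by
      have h8 : 1 * (k α : ℤ) = m₄ * m₂ * (k α : ℤ) := by rw [one_mul]; exact h6
      exact (mul_right_cancel₀ hk0 h8).symm
    have h9 : 0 < m₄ := factor_pos hm₂pos (by norm_num) h7
    have h10 : m₂ ≤ 1 := pos_factor_le h9 hm₂pos h7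
    omega
  -- the divisibility
  have hdvd : k α ∣ k β := by
    refine ⟨m₂.toNat, ?_⟩
    have h1 : ((m₂.toNat : ℤ)) = m₂ := Int.toNat_of_nonneg (le_of_lt hm₂pos)
    have h2 : (k β : ℤ) = (k α : ℤ) * (m₂.toNat : ℤ) := by rw [h1, hm₂]; ring
    exact_mod_cast h2
  refine ⟨hgβ, hdvd, ?_⟩
  -- final case analysis
  have hkβ1 : m₂ = 1 → k β = 1 * k α := by
    intro h
    rw [h, one_mul] at hm₂
    have : (k β : ℤ) = (1 * k α : ℕ) := by rw [hm₂]; push_cast; ring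
    exact_mod_cast this
  rcases hpcases with hpe | hpe | hpe
  · -- p = -1
    have hm₂1 : m₂ = 1 := by
      have h1 : m₃ * m₂ = 1 := by rw [hm₃m₂, hpe]; norm_num
      have h10 : m₂ ≤ 1 := pos_factor_le hm₃pos hm₂pos h1
      omega
    have hgα : g α = false := by
      rcases Bool.eq_false_or_eq_true (g α) with h | h
      · exact absurd (hgαp h).1 (by omega)
      · exact h
    exact Or.inl ⟨by rw [hp, hpe]; norm_num, hkβ1 hm₂1, hgα⟩
  · -- p = -2
    have h2 : m₃ * m₂ = 2 := by rw [hm₃m₂, hpe]; norm_num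
    have hm₂12 : m₂ = 1 ∨ m₂ = 2 := by
      have hle : m₂ ≤ 2 := pos_factor_le hm₃pos hm₂pos h2
      interval_cases m₂ <;> omega
    rcases hm₂12 with h | h
    · rcases Bool.eq_false_or_eq_true (g α) with hgα | hgα
      · exact Or.inr (Or.inr (Or.inr (Or.inr (Or.inr
          ⟨by rw [hp, hpe]; norm_num, hkβ1 h, hgα⟩))))
      · exact Or.inr (Or.inl ⟨by rw [hp, hpe]; norm_num, hkβ1 h, hgα⟩)
    · have hgα : g α = false := by
        rcases Bool.eq_false_or_eq_true (g α) with h' | h'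
        · exact absurd (hgαp h').2 (by omega)
        · exact h'
      have hkβ2 : k β = 2 * k α := by
        rw [h] at hm₂
        exact_mod_cast hm₂
      exact Or.inr (Or.inr (Or.inr (Or.inl ⟨by rw [hp, hpe]; norm_num, hkβ2, hgα⟩)))
  · -- p = -3
    have h2 : m₃ * m₂ = 3 := by rw [hm₃m₂, hpe]; norm_num
    have hgα : g α = false := by
      rcases Bool.eq_false_or_eq_true (g α) with h' | h'
      · exact absurd (hgαp h').1 (by omega)
      · exact h'
    have hm₂13 : m₂ = 1 ∨ m₂ = 3 := by
      have hle : m₂ ≤ 3 := pos_factor_le hm₃pos hm₂pos h2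
      interval_cases m₂ <;> omega
    rcases hm₂13 with h | h
    · exact Or.inr (Or.inr (Or.inl ⟨by rw [hp, hpe]; norm_num, hkβ1 h, hgα⟩))
    · have hkβ3 : k β = 3 * k α := by
        rw [h] at hm₂
        exact_mod_cast hm₂
      exact Or.inr (Or.inr (Or.inr (Or.inr (Or.inl
        ⟨by rw [hp, hpe]; norm_num, hkβ3, hgα⟩))))
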